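/- Every subgroup of finite index in the additive group ℤ[1/p] is equal to c·ℤ[1/p] for some positive integer c coprime to p; in particular every finite-index subgroup of ℤ[1/p] is isomorphic to ℤ[1/p]. -/
import Mathlib

/-- Every finite-index subgroup of the additive group `ℤ[1/p]` is `c · ℤ[1/p]` for
some positive integer `c` coprime to `p`; in particular it is isomorphic to `ℤ[1/p]`. -/
theorem finite_index_subgroup_zInvP
    (p : ℕ) (hp : p.Prime)
    (H : AddSubgroup (Localization.Away (p : ℤ))) (hH : H.FiniteIndex) :
    ∃ c : ℕ, 0 < c ∧ Nat.Coprime c p ∧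
      (H : Set (Localization.Away (p : ℤ)))
        = Set.range (fun y : Localization.Away (p : ℤ) => (c : Localization.Away (p : ℤ)) * y) ∧
      Nonempty (H ≃+ Localization.Away (p : ℤ)) := by
  classical
  set R := Localization.Away (p : ℤ) with hR
  have hple : Submonoid.powers (p : ℤ) ≤ nonZeroDivisors ℤ :=
    powers_le_nonZeroDivisors_of_noZeroDivisors (by exact_mod_cast hp.ne_zero)
  haveI : IsDomain R := IsLocalization.isDomain_localization hple
  have hinj : Function.Injective (algebraMap ℤ R) := IsLocalization.injective R hple
  set q : R := IsLocalization.Away.invSelf (S := R) (p : ℤ) with hqdef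
  have hpq : (p : R) * q = 1 := by
    have h := IsLocalization.Away.mul_invSelf (S := R) (p : ℤ)
    simp only [eq_intCast, Int.cast_natCast] at h
    exact h
  have hpqj : ∀ j : ℕ, (p : R) ^ j * q ^ j = 1 := by
    intro j; rw [← mul_pow, hpq, one_pow]
  have hrep : ∀ x : R, ∃ (a : ℤ) (j : ℕ), x * (p : R) ^ j = (a : R) ∧ x = (a : R) * q ^ j := by
    intro x
    have hs := IsLocalization.Away.sec_spec (S := R) (p:ℤ) x
    set a := (IsLocalization.Away.sec (S := R) (p:ℤ) x).1
    set j := (IsLocalization.Away.sec (S := R) (p:ℤ) x).2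
    simp only [eq_intCast] at hs
    push_cast at hs
    refine ⟨a, j, hs, ?_⟩
    calc x = x * ((p:R)^j * q^j) := by rw [hpqj, mul_one]
    _ = (x * (p:R)^j) * q^j := by ring
    _ = (a:R) * q^j := by rw [hs]
  set n := H.index with hn
  have hn0 : n ≠ 0 := hH.index_ne_zero
  set k := n.factorization p with hk
  set c := n / p ^ k with hc
  have hcp : Nat.Coprime c p := (Nat.coprime_ordCompl hp hn0).symm
  have hc0 : 0 < c := Nat.ordCompl_pos p hn0
  have hnck : p ^ k * c = n := Nat.ordProj_mul_ordCompl_eq_self n p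
  have hmem : ∀ x : R, n • x ∈ H := fun x => H.nsmul_index_mem x
  have hcH : ∀ y : R, (c : R) * y ∈ H := by
    intro y
    have h1 := hmem (q ^ k * y)
    have h2 : n • (q ^ k * y) = (c : R) * y := by
      rw [nsmul_eq_mul, ← hnck]
      push_cast
      calc ((p:R)^k * (c:R)) * (q^k * y) = ((p:R)^k * q^k) * ((c:R) * y) := by ring
      _ = (c:R) * y := by rw [hpqj, one_mul]
    rwa [h2] at h1
  have hqH : ∀ x : R, x ∈ H → q * x ∈ H := by
    intro x hx
    have h1 : (c : R) * (q * x) ∈ H := hcH _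
    have h2 : (p : R) * (q * x) ∈ H := by
      rw [← mul_assoc, hpq, one_mul]; exact hx
    obtain ⟨u, v, huv⟩ : IsCoprime (c : ℤ) (p : ℤ) := by
      rw [Int.isCoprime_iff_gcd_eq_one]
      exact_mod_cast hcp
    have heq : u • ((c : R) * (q * x)) + v • ((p : R) * (q * x)) = q * x := by
      simp only [zsmul_eq_mul]
      calc (u:R) * ((c:R) * (q*x)) + (v:R) * ((p:R) * (q*x))
          = (((u * c + v * p : ℤ) : R)) * (q * x) := by push_cast; ring
      _ = q * x := by rw [huv]; push_cast; rw [one_mul]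
    rw [← heq]
    exact H.add_mem (H.zsmul_mem h1 u) (H.zsmul_mem h2 v)
  have hqjH : ∀ (j : ℕ) (x : R), x ∈ H → q ^ j * x ∈ H := by
    intro j
    induction j with
    | zero => intro x hx; simpa using hx
    | succ m ih =>
      intro x hx
      have := hqH _ (ih x hx)
      rwa [← mul_assoc, mul_comm q (q ^ m), ← pow_succ] at this
  -- the least positive natural number whose image lies in H
  have hex : ∃ m : ℕ, 0 < m ∧ ((m : ℤ) : R) ∈ H := by
    refine ⟨c, hc0, ?_⟩
    have := hcH 1
    rw [mul_one] at this
    exact_mod_cast this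
  set d := Nat.find hex with hd
  obtain ⟨hd0, hdH⟩ : 0 < d ∧ ((d : ℤ) : R) ∈ H := Nat.find_spec hex
  have hdmin : ∀ m : ℕ, 0 < m → ((m : ℤ) : R) ∈ H → d ≤ m := fun m h1 h2 =>
    Nat.find_le ⟨h1, h2⟩
  -- d divides every integer whose image lies in H
  have hdvd : ∀ a : ℤ, ((a : R) ∈ H) → (d : ℤ) ∣ a := by
    intro a haH
    rcases eq_or_ne a 0 with rfl | ha0
    · exact dvd_zero _
    set g := Int.gcd (d : ℤ) a with hg
    have hg0 : 0 < g := Int.gcd_pos_of_ne_zero_right _ ha0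
    have hgH : ((g : ℤ) : R) ∈ H := by
      have he : ((g : ℕ) : ℤ) = (d : ℤ) * Int.gcdA (d : ℤ) a + a * Int.gcdB (d : ℤ) a :=
        Int.gcd_eq_gcd_ab _ _
      have hm : Int.gcdA (d : ℤ) a • ((d : ℤ) : R) + Int.gcdB (d : ℤ) a • (a : R) ∈ H :=
        H.add_mem (H.zsmul_mem hdH _) (H.zsmul_mem haH _)
      have : Int.gcdA (d : ℤ) a • ((d : ℤ) : R) + Int.gcdB (d : ℤ) a • (a : R)
          = ((g : ℤ) : R) := by
        simp only [zsmul_eq_mul]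
        rw [he]; push_cast; ring
      rwa [this] at hm
    have hgled : g ∣ d := by
      have := Int.gcd_dvd_left (a := (d : ℤ)) (b := a)
      exact_mod_cast this
    have : d ≤ g := hdmin g hg0 hgH
    have hgd : g = d := le_antisymm (Nat.le_of_dvd hd0 hgled) this
    have := Int.gcd_dvd_right (a := (d : ℤ)) (b := a)
    rwa [← hg, hgd] at this
  -- the set equality
  have hset : (H : Set R) = Set.range (fun y : R => (d : R) * y) := by
    ext x
    simp only [SetLike.mem_coe, Set.mem_range]
    constructor
    · intro hx
      obtain ⟨a, j, h1, h2⟩ := hrep x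
      have haH : (a : R) ∈ H := by
        have hm : ((p : ℤ) ^ j) • x ∈ H := H.zsmul_mem hx _
        have : ((p : ℤ) ^ j) • x = (a : R) := by
          rw [zsmul_eq_mul, ← h1]; push_cast; ring
        rwa [this] at hm
      obtain ⟨b, hb⟩ := hdvd a haH
      refine ⟨(b : R) * q ^ j, ?_⟩
      rw [h2, hb]
      push_cast
      ring
    · rintro ⟨y, rfl⟩
      obtain ⟨a, j, h1, h2⟩ := hrep y
      have hm : a • (q ^ j * ((d : ℤ) : R)) ∈ H := H.zsmul_mem (hqjH j _ hdH) a
      have : a • (q ^ j * ((d : ℤ) : R)) = (d : R) * y := by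
        rw [zsmul_eq_mul, h2]; push_cast; ring
      rwa [this] at hm
  -- coprimality of d and p
  have hdc : (d : ℤ) ∣ (c : ℤ) := by
    apply hdvd
    have := hcH 1
    rw [mul_one] at this
    exact_mod_cast this
  have hdcn : d ∣ c := by exact_mod_cast hdc
  have hdp : Nat.Coprime d p := Nat.Coprime.coprime_dvd_left hdcn hcp
  -- the additive equivalence
  have hdne : (d : R) ≠ 0 := by
    intro h
    have : ((d : ℤ) : R) = ((0 : ℤ) : R) := by push_cast; simpa using h
    have := hinj (by simpa only [eq_intCast] using this)
    omega
  have hdmem : ∀ y : R, (d : R) * y ∈ H := by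
    intro y
    have : (d : R) * y ∈ (H : Set R) := by
      rw [hset]; exact ⟨y, rfl⟩
    exact this
  let f : R →+ H := AddMonoidHom.codRestrict (AddMonoidHom.mulLeft (d : R)) H hdmem
  have hbij : Function.Bijective f := by
    constructor
    · intro y₁ y₂ h
      have : (d : R) * y₁ = (d : R) * y₂ := congrArg Subtype.val h
      exact mul_left_cancel₀ hdne this
    · rintro ⟨x, hx⟩
      have : x ∈ Set.range (fun y : R => (d : R) * y) := by rw [← hset]; exact hx
      obtain ⟨y, hy⟩ := this
      exact ⟨y, Subtype.ext hy⟩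
  exact ⟨d, hd0, hdp, hset, ⟨(AddEquiv.ofBijective f hbij).symm⟩⟩
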